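/- Let n ≥ 1, let B be an n×n real matrix that is nonnegative, column-stochastic, and irreducible, and let β ∈ (0,1). Set B_β = (1−β)I + βB. Let π ∈ ℝⁿ be a nonnegative vector with entries summing to 1 and Bπ = π. Then the spectral radius of B_β − π𝟏ᵀ is strictly less than 1, where 𝟏 ∈ ℝⁿ is the all-ones vector. -/

import Mathlib

open Matrix Polynomial Finset

/-- Powers of a nonnegative matrix are nonnegative. -/
lemma pow_nonneg' {n : ℕ} {B : Matrix (Fin n) (Fin n) ℝ}
    (hB : ∀ i j, 0 ≤ B i j) (k : ℕ) : ∀ i j, 0 ≤ (B ^ k) i j := by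
  induction k with
  | zero => intro i j; simp [Matrix.one_apply]; split <;> norm_num
  | succ k ih =>
    intro i j
    rw [pow_succ, Matrix.mul_apply]
    exact Finset.sum_nonneg fun l _ => mul_nonneg (ih i l) (hB l j)

/-- A nonnegative fixed vector of an irreducible nonneg matrix with a positive entry
is everywhere positive. -/
lemma fixed_pos {n : ℕ} {B : Matrix (Fin n) (Fin n) ℝ}
    (hB : ∀ i j, 0 ≤ B i j)
    (hirr : ∀ i j, ∃ k : ℕ, 0 < k ∧ 0 < (B ^ k) i j)
    {u : Fin n → ℝ} (hu0 : ∀ i, 0 ≤ u i) (hfix : B.mulVec u = u)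
    {j : Fin n} (hj : 0 < u j) : ∀ i, 0 < u i := by
  have hpow : ∀ k : ℕ, (B ^ k).mulVec u = u := by
    intro k
    induction k with
    | zero => simp
    | succ k ih => rw [pow_succ', ← Matrix.mulVec_mulVec, ih, hfix]
  intro i
  obtain ⟨k, -, hk⟩ := hirr i j
  have := hpow k
  have h1 : (B ^ k).mulVec u i = u i := congrFun this i
  rw [Matrix.mulVec, dotProduct] at h1
  have h2 : (B ^ k) i j * u j ≤ ∑ l, (B ^ k) i l * u l := by
    apply Finset.single_le_sum (f := fun l => (B ^ k) i l * u l)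
    · intro l _; exact mul_nonneg (pow_nonneg' hB k i l) (hu0 l)
    · exact Finset.mem_univ j
  have := mul_pos hk hj
  linarith [h2, h1.symm ▸ h2]

/-- If B is column-stochastic nonneg and Bu = u, then B u⁺ = u⁺. -/
lemma fixed_posPart {n : ℕ} {B : Matrix (Fin n) (Fin n) ℝ}
    (hB : ∀ i j, 0 ≤ B i j) (hcol : ∀ j, ∑ i, B i j = 1)
    {u : Fin n → ℝ} (hfix : B.mulVec u = u) :
    B.mulVec (fun i => max (u i) 0) = (fun i => max (u i) 0) := by
  set p : Fin n → ℝ := fun i => max (u i) 0 with hp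
  have hge : ∀ i, p i ≤ B.mulVec p i := by
    intro i
    have h1 : u i ≤ B.mulVec p i := by
      have := congrFun hfix i
      rw [Matrix.mulVec, dotProduct] at this ⊢
      rw [← this]
      apply Finset.sum_le_sum
      intro j _
      exact mul_le_mul_of_nonneg_left (le_max_left _ _) (hB i j)
    have h2 : (0:ℝ) ≤ B.mulVec p i := by
      rw [Matrix.mulVec, dotProduct]
      exact Finset.sum_nonneg fun j _ => mul_nonneg (hB i j) (le_max_right _ _)
    exact max_le h1 h2
  have hsum : ∑ i, B.mulVec p i = ∑ i, p i := by
    simp only [Matrix.mulVec, dotProduct]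
    rw [Finset.sum_comm]
    congr 1; funext j
    rw [← Finset.sum_mul, hcol, one_mul]
  funext i
  have : ∀ i ∈ Finset.univ, B.mulVec p i - p i = 0 := by
    rw [← Finset.sum_eq_zero_iff_of_nonneg]
    · rw [Finset.sum_sub_distrib, hsum, sub_self]
    · intro i _; linarith [hge i]
  linarith [this i (Finset.mem_univ i)]

/-- Key real lemma: fixed vector with zero sum is zero. -/
lemma fixed_sum_zero {n : ℕ} {B : Matrix (Fin n) (Fin n) ℝ}
    (hB : ∀ i j, 0 ≤ B i j) (hcol : ∀ j, ∑ i, B i j = 1)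
    (hirr : ∀ i j, ∃ k : ℕ, 0 < k ∧ 0 < (B ^ k) i j)
    {u : Fin n → ℝ} (hfix : B.mulVec u = u) (hsum : ∑ i, u i = 0) :
    u = 0 := by
  have hp := fixed_posPart hB hcol hfix
  have hnfix : B.mulVec (-u) = -u := by rw [Matrix.mulVec_neg, hfix]
  have hq := fixed_posPart hB hcol hnfix
  -- claim: u is sign-definite
  have hsign : (∀ i, 0 ≤ u i) ∨ (∀ i, u i ≤ 0) := by
    by_contra h
    push_neg at h
    obtain ⟨⟨a, ha⟩, ⟨b, hb⟩⟩ := h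
    have hpa : 0 < max ((-u) a) 0 := by simp [lt_max_iff]; linarith
    have hqa : ∀ i, 0 < max ((-u) i) 0 :=
      fixed_pos hB hirr (fun i => le_max_right _ _) hq hpa
    have h1 := hqa b
    simp only [Pi.neg_apply, lt_max_iff, lt_irrefl, or_false] at h1
    linarith
  funext i
  rcases hsign with h | h
  · have := (Finset.sum_eq_zero_iff_of_nonneg (fun i _ => h i)).mp hsum i (Finset.mem_univ i)
    simpa using this
  · have : ∑ i, (-u) i = 0 := by simp [hsum]
    have := (Finset.sum_eq_zero_iff_of_nonneg (fun i _ => neg_nonneg.mpr (h i))).mp this i (Finset.mem_univ i)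
    simpa using this


lemma root_eigen {n : ℕ} (A : Matrix (Fin n) (Fin n) ℂ) {z : ℂ}
    (hz : z ∈ A.charpoly.roots) :
    ∃ v : Fin n → ℂ, v ≠ 0 ∧ A.mulVec v = z • v := by
  have hroot : A.charpoly.eval z = 0 := by
    exact (Polynomial.mem_roots (A.charpoly_monic.ne_zero)).mp hz
  have hdet : (Matrix.diagonal (fun _ : Fin n => z) - A).det = 0 := by
    rw [Matrix.charpoly, ← Polynomial.coe_evalRingHom, RingHom.map_det] at hroot
    rw [← hroot]
    congr 1
    funext i j
    simp [Matrix.charmatrix_apply, Matrix.map_apply, Matrix.sub_apply, Matrix.diagonal_apply]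
    split <;> simp
  obtain ⟨v, hv, hmv⟩ := Matrix.exists_mulVec_eq_zero_iff.mpr hdet
  refine ⟨v, hv, ?_⟩
  rw [Matrix.sub_mulVec] at hmv
  have : (Matrix.diagonal (fun _ : Fin n => z)).mulVec v = z • v := by
    funext i
    simp [Matrix.mulVec_diagonal]
  rw [this] at hmv
  funext i
  have := congrFun hmv i
  simp only [Pi.sub_apply, Pi.zero_apply, Pi.smul_apply, smul_eq_mul] at this
  simp only [Pi.smul_apply, smul_eq_mul]
  linear_combination -this

lemma eig_lt_one (n : ℕ) (B : Matrix (Fin n) (Fin n) ℝ) (β : ℝ)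
    (hβ0 : 0 < β) (hβ1 : β < 1)
    (hB_nonneg : ∀ i j, 0 ≤ B i j)
    (hB_col : ∀ j, ∑ i, B i j = 1)
    (hB_irr : ∀ i j, ∃ k : ℕ, 0 < k ∧ 0 < (B ^ k) i j)
    (π : Fin n → ℝ) (hπ_sum : ∑ i, π i = 1)
    {z : ℂ} {v : Fin n → ℂ} (hv : v ≠ 0)
    (heig : (((1 - β) • (1 : Matrix (Fin n) (Fin n) ℝ) + β • B
      - Matrix.of (fun i _ => π i)).map (Complex.ofReal)).mulVec v = z • v) :
    ‖z‖ < 1 := by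
  set M : Matrix (Fin n) (Fin n) ℝ :=
    (1 - β) • (1 : Matrix (Fin n) (Fin n) ℝ) + β • B - Matrix.of (fun i _ => π i) with hM
  set BC : Matrix (Fin n) (Fin n) ℂ := B.map (Complex.ofReal) with hBC
  set PC : Matrix (Fin n) (Fin n) ℂ := Matrix.of (fun i _ => (π i : ℂ)) with hPC
  have hMC : M.map (Complex.ofReal) =
      ((1 - β : ℝ) : ℂ) • 1 + (β : ℂ) • BC - PC := by
    ext i j
    simp only [hM, hBC, hPC, Matrix.map_apply, Matrix.sub_apply, Matrix.add_apply,
      Matrix.smul_apply, Matrix.of_apply, smul_eq_mul, Matrix.one_apply]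
    split_ifs <;> push_cast <;> ring
  -- column sums of M are zero
  have hMcol : ∀ j, ∑ i, M i j = 0 := by
    intro j
    simp only [hM, Matrix.sub_apply, Matrix.add_apply, Matrix.smul_apply, Matrix.of_apply,
      smul_eq_mul]
    rw [Finset.sum_sub_distrib, Finset.sum_add_distrib, ← Finset.mul_sum, ← Finset.mul_sum,
      hπ_sum, hB_col]
    have : ∑ i, (1 : Matrix (Fin n) (Fin n) ℝ) i j = 1 := by
      simp [Matrix.one_apply]
    rw [this]; ring
  -- z * ∑ v = 0
  have hzsum : z * ∑ i, v i = 0 := by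
    have h1 : ∑ i, (z • v) i = ∑ i, ((M.map Complex.ofReal).mulVec v) i := by rw [heig]
    simp only [Pi.smul_apply, smul_eq_mul, ← Finset.mul_sum] at h1
    rw [h1]
    simp only [Matrix.mulVec, dotProduct, Matrix.map_apply]
    rw [Finset.sum_comm]
    refine Finset.sum_eq_zero fun j _ => ?_
    rw [← Finset.sum_mul]
    have : (∑ i, (M i j : ℂ)) = 0 := by
      rw [← Complex.ofReal_sum, hMcol j, Complex.ofReal_zero]
    rw [this, zero_mul]
  by_cases hz : z = 0
  · simp [hz]
  have hvsum : ∑ i, v i = 0 := by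
    rcases mul_eq_zero.mp hzsum with h | h
    · exact absurd h hz
    · exact h
  -- PC v = 0
  have hPv : PC.mulVec v = 0 := by
    funext i
    simp only [hPC, Matrix.mulVec, dotProduct, Matrix.of_apply, Pi.zero_apply]
    rw [← Finset.mul_sum, hvsum, mul_zero]
  -- BC v = μ v
  set μ : ℂ := (z - ((1 - β : ℝ) : ℂ)) / (β : ℂ) with hμdef
  have hβC : (β : ℂ) ≠ 0 := by
    simp only [ne_eq, Complex.ofReal_eq_zero]
    exact ne_of_gt hβ0
  have hBeig : BC.mulVec v = μ • v := by
    have h2 : (((1 - β : ℝ) : ℂ) • 1 + (β : ℂ) • BC - PC).mulVec v = z • v := by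
      rw [← hMC]; exact heig
    rw [Matrix.sub_mulVec, Matrix.add_mulVec, hPv, sub_zero, Matrix.smul_mulVec,
      Matrix.smul_mulVec, Matrix.one_mulVec] at h2
    funext i
    have h3 := congrFun h2 i
    simp only [Pi.add_apply, Pi.smul_apply, smul_eq_mul] at h3 ⊢
    rw [hμdef]
    push_cast at h3 ⊢
    field_simp
    linear_combination h3
  -- |μ| ≤ 1
  have habs : ∀ i, ‖(BC.mulVec v) i‖ ≤ ∑ j, B i j * ‖v j‖ := by
    intro i
    simp only [Matrix.mulVec, dotProduct, hBC, Matrix.map_apply]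
    calc ‖∑ j, (B i j : ℂ) * v j‖ ≤ ∑ j, ‖(B i j : ℂ) * v j‖ := by
          exact norm_sum_le _ _
      _ = ∑ j, B i j * ‖v j‖ := by
          refine Finset.sum_congr rfl fun j _ => ?_
          rw [norm_mul, Complex.norm_real, Real.norm_eq_abs, abs_of_nonneg (hB_nonneg i j)]
  have hs_pos : 0 < ∑ i, ‖v i‖ := by
    have : ∃ i, v i ≠ 0 := by
      by_contra h
      push_neg at h
      exact hv (funext h)
    obtain ⟨i, hi⟩ := this
    refine Finset.sum_pos' (fun j _ => norm_nonneg _) ⟨i, Finset.mem_univ i, ?_⟩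
    exact norm_pos_iff.mpr hi
  have hμle : ‖μ‖ ≤ 1 := by
    have h4 : ‖μ‖ * ∑ i, ‖v i‖ ≤ ∑ i, ‖v i‖ := by
      calc ‖μ‖ * ∑ i, ‖v i‖
          = ∑ i, ‖μ * v i‖ := by
            rw [Finset.mul_sum]
            exact Finset.sum_congr rfl fun i _ => (norm_mul _ _).symm
        _ = ∑ i, ‖(BC.mulVec v) i‖ := by
            refine Finset.sum_congr rfl fun i _ => ?_
            rw [hBeig]; rfl
        _ ≤ ∑ i, ∑ j, B i j * ‖v j‖ :=
            Finset.sum_le_sum fun i _ => habs i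
        _ = ∑ j, (∑ i, B i j) * ‖v j‖ := by
            rw [Finset.sum_comm]
            exact Finset.sum_congr rfl fun j _ => (Finset.sum_mul _ _ _).symm
        _ = ∑ j, ‖v j‖ := by
            refine Finset.sum_congr rfl fun j _ => ?_
            rw [hB_col j, one_mul]
    nlinarith
  -- z = (1-β) + β μ
  have hzμ : z = ((1 - β : ℝ) : ℂ) + (β : ℂ) * μ := by
    rw [hμdef]
    field_simp
    ring
  by_contra hcon
  push_neg at hcon
  -- so 1 ≤ |z|; show μ = 1
  have hμ1 : μ = 1 := by
    have ha2 : μ.re ^ 2 + μ.im ^ 2 ≤ 1 := by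
      have h := Complex.sq_norm μ
      rw [Complex.normSq_apply] at h
      nlinarith [hμle, norm_nonneg μ]
    have hz2 : 1 ≤ ‖z‖ ^ 2 := by nlinarith [norm_nonneg z]
    have hzre : z.re = (1 - β) + β * μ.re := by rw [hzμ]; simp
    have hzim : z.im = β * μ.im := by rw [hzμ]; simp
    have hsq : ‖z‖ ^ 2 = z.re ^ 2 + z.im ^ 2 := by
      rw [Complex.sq_norm, Complex.normSq_apply]; ring
    rw [hsq, hzre, hzim] at hz2
    have hge : 1 ≤ μ.re := by
      by_contra hcon2
      push_neg at hcon2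
      nlinarith [mul_le_mul_of_nonneg_left ha2 (sq_nonneg β),
        mul_pos (mul_pos hβ0 (show (0:ℝ) < 1 - β by linarith))
          (show (0:ℝ) < 1 - μ.re by linarith)]
    have hle : μ.re ≤ 1 := by nlinarith [sq_nonneg (μ.re - 1), sq_nonneg μ.im]
    have hre1 : μ.re = 1 := le_antisymm hle hge
    have h8 : μ.im ^ 2 = 0 := le_antisymm (by nlinarith) (sq_nonneg _)
    have him0 : μ.im = 0 := by
      exact pow_eq_zero_iff (two_ne_zero) |>.mp h8
    exact Complex.ext hre1 him0
  -- now BC v = v with ∑ v = 0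
  rw [hμ1, one_smul] at hBeig
  -- real and imaginary parts
  have hre : B.mulVec (fun i => (v i).re) = fun i => (v i).re := by
    funext i
    have h5 := congrFun hBeig i
    simp only [Matrix.mulVec, dotProduct, hBC, Matrix.map_apply] at h5 ⊢
    have : (∑ j, (B i j : ℂ) * v j).re = ∑ j, B i j * (v j).re := by
      rw [Complex.re_sum]
      refine Finset.sum_congr rfl fun j _ => ?_
      simp [Complex.mul_re]
    rw [← this, h5]
  have him : B.mulVec (fun i => (v i).im) = fun i => (v i).im := by
    funext i
    have h5 := congrFun hBeig i
    simp only [Matrix.mulVec, dotProduct, hBC, Matrix.map_apply] at h5 ⊢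
    have : (∑ j, (B i j : ℂ) * v j).im = ∑ j, B i j * (v j).im := by
      rw [Complex.im_sum]
      refine Finset.sum_congr rfl fun j _ => ?_
      simp [Complex.mul_im]
    rw [← this, h5]
  have hresum : ∑ i, (v i).re = 0 := by
    rw [← Complex.re_sum, hvsum, Complex.zero_re]
  have himsum : ∑ i, (v i).im = 0 := by
    rw [← Complex.im_sum, hvsum, Complex.zero_im]
  have h6 := fixed_sum_zero hB_nonneg hB_col hB_irr hre hresum
  have h7 := fixed_sum_zero hB_nonneg hB_col hB_irr him himsum
  apply hv
  funext i
  have := congrFun h6 i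
  have := congrFun h7 i
  simp only [Pi.zero_apply] at *
  exact Complex.ext (congrFun h6 i) (congrFun h7 i)


/-- The spectral radius of a real square matrix: the maximum modulus of the complex
roots of its characteristic polynomial. -/
noncomputable def specRad {n : ℕ} (M : Matrix (Fin n) (Fin n) ℝ) : ℝ :=
  sSup {x : ℝ | ∃ z ∈ (M.map (Complex.ofReal : ℝ → ℂ)).charpoly.roots, ‖z‖ = x}

/-- For an irreducible column-stochastic matrix `B`, `β ∈ (0,1)`,
`B_β = (1-β)I + βB`, and `π` the stochastic right eigenvector of `B`,
the spectral radius of `B_β - π𝟏ᵀ` is strictly less than 1. -/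
theorem stmt_3 (n : ℕ) (hn : 1 ≤ n) (B : Matrix (Fin n) (Fin n) ℝ) (β : ℝ)
    (hβ0 : 0 < β) (hβ1 : β < 1)
    (hB_nonneg : ∀ i j, 0 ≤ B i j)
    (hB_col : ∀ j, ∑ i, B i j = 1)
    (hB_irr : ∀ i j, ∃ k : ℕ, 0 < k ∧ 0 < (B ^ k) i j)
    (π : Fin n → ℝ) (hπ_nonneg : ∀ i, 0 ≤ π i) (hπ_sum : ∑ i, π i = 1)
    (hπB : Matrix.mulVec B π = π) :
    specRad ((1 - β) • (1 : Matrix (Fin n) (Fin n) ℝ) + β • B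
      - Matrix.of (fun i _ => π i)) < 1 := by
  set M : Matrix (Fin n) (Fin n) ℝ :=
    (1 - β) • (1 : Matrix (Fin n) (Fin n) ℝ) + β • B - Matrix.of (fun i _ => π i) with hM
  set MC : Matrix (Fin n) (Fin n) ℂ := M.map (Complex.ofReal) with hMCdef
  set S : Set ℝ := {x : ℝ | ∃ z ∈ MC.charpoly.roots, ‖z‖ = x} with hS
  have hSeq : S = (fun z : ℂ => ‖z‖) '' {z : ℂ | z ∈ MC.charpoly.roots.toFinset} := by
    ext x
    simp only [hS, Set.mem_setOf_eq, Set.mem_image, Multiset.mem_toFinset]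
  have hfin : S.Finite := by
    rw [hSeq]
    exact (MC.charpoly.roots.toFinset.finite_toSet).image _
  have hne : S.Nonempty := by
    have hmonic := MC.charpoly_monic
    have hdeg : MC.charpoly.natDegree = n := by
      simp [MC.charpoly_natDegree_eq_dim]
    have hdeg' : 0 < MC.charpoly.degree := by
      rw [Polynomial.degree_eq_natDegree hmonic.ne_zero, hdeg]
      exact_mod_cast hn
    obtain ⟨z, hz⟩ := Complex.exists_root hdeg'
    exact ⟨‖z‖, z, (Polynomial.mem_roots hmonic.ne_zero).mpr hz, rfl⟩
  rw [show specRad M = sSup S from rfl]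
  rw [hfin.csSup_lt_iff hne]
  rintro x ⟨z, hzroot, rfl⟩
  obtain ⟨v, hv, heig⟩ := root_eigen MC hzroot
  exact eig_lt_one n B β hβ0 hβ1 hB_nonneg hB_col hB_irr π hπ_sum hv heig
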